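/- Under the same algebraic hypotheses (P_s² = P_s, P_s K = K P_s = 0, K² = κK with κ = -[d]_q(q^{d+1}+q^{-d-1})), the operator R̂ = (q+q^{-1})P_s - q^{-1}Id - (q-q^{-1})(1+q^{2d+2})^{-1}K satisfies R̂ - R̂^{-1} = (q - q^{-1})(Id - K). -/

import Mathlib

set_option maxHeartbeats 1000000

/-- Under the same algebraic hypotheses, the operator
R̂ = (q+q⁻¹)P_s - q⁻¹Id - (q-q⁻¹)(1+q^{2d+2})⁻¹K satisfies
R̂ - R̂⁻¹ = (q - q⁻¹)(Id - K), where
R̂⁻¹ = (q+q⁻¹)P_s - q Id + (q-q⁻¹)(1+q^{-2d-2})⁻¹K. -/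
theorem stmt11 (K : Type*) [Field K] [CharZero K]
    (V : Type*) [AddCommGroup V] [Module K V]
    (q : K) (hq0 : q ≠ 0) (hqru : ∀ k : ℕ, k ≠ 0 → q ^ k ≠ 1)
    (d : ℤ) (hd : (1 : K) + q ^ (2 * d + 2) ≠ 0)
    (κ : K) (hκ : κ = -((q ^ d - q ^ (-d)) / (q - q⁻¹)) * (q ^ (d + 1) + q ^ (-(d + 1))))
    (Ps Kop : Module.End K V)
    (hPs : Ps * Ps = Ps) (hPK : Ps * Kop = 0) (hKP : Kop * Ps = 0)
    (hK2 : Kop * Kop = κ • Kop)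
    (Rh Rhinv : Module.End K V)
    (hRh : Rh = (q + q⁻¹) • Ps - q⁻¹ • (1 : Module.End K V)
        + (-(q - q⁻¹) * ((1 : K) + q ^ (2 * d + 2))⁻¹) • Kop)
    (hRhinv : Rhinv = (q + q⁻¹) • Ps - q • (1 : Module.End K V)
        + ((q - q⁻¹) * ((1 : K) + q ^ (-(2 * d + 2)))⁻¹) • Kop) :
    Rh * Rhinv = 1 ∧
    Rh - Rhinv = (q - q⁻¹) • ((1 : Module.End K V) - Kop) := by
  have hq2 : q - q⁻¹ ≠ 0 := by
    refine sub_ne_zero.mpr fun h => hqru 2 two_ne_zero ?_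
    rw [sq]
    nth_rewrite 2 [h]
    exact mul_inv_cancel₀ hq0
  have h1 : q ^ (d + 1) = q ^ d * q := zpow_add_one₀ hq0 d
  have h2 : q ^ (2 * d + 2) = q ^ d * q ^ d * (q * q) := by
    rw [show (2 * d + 2) = d + d + 1 + 1 by ring, zpow_add_one₀ hq0, zpow_add_one₀ hq0,
      zpow_add₀ hq0]
    ring
  have h3 : q ^ (-d) = (q ^ d)⁻¹ := zpow_neg q d
  have h4 : q ^ (-(d + 1)) = (q ^ d * q)⁻¹ := by rw [zpow_neg, h1]
  have h5 : q ^ (-(2 * d + 2)) = (q ^ d * q ^ d * (q * q))⁻¹ := by rw [zpow_neg, h2]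
  set a := q ^ d with ha'
  have ha : a ≠ 0 := zpow_ne_zero _ hq0
  rw [h2] at hd
  rw [h1, h3, h4] at hκ
  rw [h2] at hRh
  rw [h5] at hRhinv
  have hq2' : q * q - 1 ≠ 0 := by
    intro h
    exact hqru 2 two_ne_zero (by rw [sq]; linear_combination h)
  have hB : a * a * (q * q) ≠ 0 := by
    exact mul_ne_zero (mul_ne_zero ha ha) (mul_ne_zero hq0 hq0)
  have hsimp : ((1 : K) + (a * a * (q * q))⁻¹)⁻¹
      = (a * a * (q * q)) * ((1 : K) + a * a * (q * q))⁻¹ := by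
    rw [show (1 : K) + (a * a * (q * q))⁻¹ = ((1 : K) + a * a * (q * q)) / (a * a * (q * q))
      from by field_simp; ring, inv_div, div_eq_mul_inv]
  rw [hsimp] at hRhinv
  constructor
  · rw [hRh, hRhinv]
    simp only [mul_add, add_mul, mul_sub, sub_mul, smul_mul_smul_comm, one_mul, mul_one,
      hPs, hPK, hKP, hK2, smul_zero, smul_smul, add_zero, zero_add, sub_zero, zero_sub]
    match_scalars
    · ring
    · field_simp
    · have hκ2 : κ * (a * a * (q * q - 1)) = -((a * a - 1) * (a * a * (q * q) + 1)) := by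
        have hq2'' : q ^ 2 - 1 ≠ 0 := by rw [sq]; exact hq2'
        rw [hκ]; field_simp
      have hu : q * q⁻¹ = 1 := mul_inv_cancel₀ hq0
      have ht : (1 + a * a * (q * q)) * (1 + a * a * (q * q))⁻¹ = 1 := mul_inv_cancel₀ hd
      linear_combination ((q*q - 1) * (a*a - 1) * (1 + a*a*(q*q))⁻¹) * ht
        + (-(1 + a*a*(q*q))⁻¹ - a*a*(q*q)*(1 + a*a*(q*q))⁻¹ + 2*a*a*(1 + a*a*(q*q))⁻¹
           + a*a*(1 + a*a*(q*q))⁻¹*(q*q⁻¹ - 1)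
           + 2*a*a*(1 + a*a*(q*q))⁻¹*(1 + a*a*(q*q))⁻¹*κ*(q*q - 1)
           - a*a*(1 + a*a*(q*q))⁻¹*(1 + a*a*(q*q))⁻¹*κ*(q*q⁻¹ - 1)) * hu
        + (-(1 + a*a*(q*q))⁻¹*(1 + a*a*(q*q))⁻¹*(q*q - 1)) * hκ2
  · rw [hRh, hRhinv]
    match_scalars
    · ring
    · field_simp
      ring
    · have hd' : 1 + q ^ 2 * a ^ 2 ≠ 0 := by
        intro h; apply hd; linear_combination h
      field_simp
      ring
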